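/- Define g(x) = (1 − x^{−1/log(x) − x/(1-x)}) / (1 − x) for real x > 0, x ≠ 1. Then g(x) ≥ 1/e for all x > 0 with x ≠ 1. -/

import Mathlib

open Real Set

noncomputable section GAux

/-- the constant `c = e - 1` -/
private def cc : ℝ := Real.exp 1 - 1

private lemma exp_one_gt : (2.71:ℝ) < Real.exp 1 :=
  lt_trans (by norm_num) Real.exp_one_gt_d9

private lemma exp_one_lt : Real.exp 1 < 2.72 :=
  lt_trans Real.exp_one_lt_d9 (by norm_num)

private lemma cc_pos : 0 < cc := by
  have := exp_one_gt; unfold cc; linarith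

private lemma cc_sq_gt_two : 2 < cc ^ 2 := by
  have := exp_one_gt; unfold cc; nlinarith

private lemma cc_sq_lt_four : cc ^ 2 < 4 := by
  have h1 := exp_one_lt; have h2 := exp_one_gt; unfold cc; nlinarith

/-- Padé-type auxiliary function. -/
private def FF (u : ℝ) : ℝ := (1 + u) / 2 - 1 / (2 * (1 + u)) - Real.log (1 + u)

private lemma FF_hasDeriv {u : ℝ} (hu : 0 < 1 + u) :
    HasDerivAt FF (1 / 2 + 1 / (2 * (1 + u) ^ 2) - 1 / (1 + u)) u := by
  have h1 : HasDerivAt (fun y : ℝ => 1 + y) 1 u := (hasDerivAt_id u).const_add 1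
  have h2 : HasDerivAt (fun y : ℝ => (1 + y) / 2) (1 / 2) u := by
    simpa using h1.div_const 2
  have h3 : HasDerivAt (fun y : ℝ => 2 * (1 + y)) 2 u := by
    simpa using h1.const_mul 2
  have h4 : HasDerivAt (fun y : ℝ => 1 / (2 * (1 + y))) (-(2 / (2 * (1 + u)) ^ 2)) u := by
    simpa using (h3.inv (by positivity)).const_mul (1:ℝ) |>.congr_deriv (by ring)
  have h5 : HasDerivAt (fun y : ℝ => Real.log (1 + y)) (1 / (1 + u)) u := by
    simpa using h1.log hu.ne'
  have := (h2.sub h4).sub h5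
  refine this.congr_deriv ?_
  have hu0 : (1:ℝ) + u ≠ 0 := hu.ne'
  field_simp
  ring

private lemma padeLog {u : ℝ} (hu : 0 ≤ u) :
    Real.log (1 + u) ≤ (1 + u) / 2 - 1 / (2 * (1 + u)) := by
  have hmono : MonotoneOn FF (Ici (0:ℝ)) := by
    apply monotoneOn_of_hasDerivWithinAt_nonneg (convex_Ici 0)
    · intro y hy
      have hy' : (0:ℝ) < 1 + y := by simp at hy; linarith
      exact ((FF_hasDeriv hy').differentiableAt.continuousAt).continuousWithinAt
    · intro y hy
      rw [interior_Ici] at hy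
      have hy' : (0:ℝ) < 1 + y := by simp at hy; linarith
      exact (FF_hasDeriv hy').hasDerivWithinAt
    · intro y hy
      rw [interior_Ici] at hy
      have hy' : (0:ℝ) < y := hy
      have h1 : (0:ℝ) < 1 + y := by linarith
      rw [div_add_div _ _ (by norm_num) (by positivity), div_sub_div _ _ (by positivity) h1.ne']
      apply div_nonneg _ (by positivity)
      nlinarith [mul_nonneg h1.le (sq_nonneg y)]
  have h0 : FF 0 = 0 := by simp [FF]
  have := hmono (self_mem_Ici) hu hu
  rw [h0] at this
  unfold FF at this
  linarith

/-- the function `ψ = φ'`. -/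
private def PSI (x : ℝ) : ℝ := Real.exp 1 / (x + cc) - Real.log (x + cc) + Real.log x

private lemma PSI_hasDeriv {x : ℝ} (hx : 0 < x) :
    HasDerivAt PSI (-(Real.exp 1 / (x + cc) ^ 2) - 1 / (x + cc) + 1 / x) x := by
  have hxc : 0 < x + cc := by have := cc_pos; linarith
  have h1 : HasDerivAt (fun y : ℝ => y + cc) 1 x := (hasDerivAt_id x).add_const cc
  have h2 : HasDerivAt (fun y : ℝ => Real.exp 1 / (y + cc)) (-(Real.exp 1 / (x + cc) ^ 2)) x := by
    simpa [div_eq_mul_inv] using ((h1.inv hxc.ne').const_mul (Real.exp 1)).congr_deriv (by ring)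
  have h3 : HasDerivAt (fun y : ℝ => Real.log (y + cc)) (1 / (x + cc)) x := by
    simpa using h1.log hxc.ne'
  exact (h2.sub h3).add (Real.hasDerivAt_log hx.ne') |>.congr_deriv (by simp [one_div])

private lemma PSI_one : PSI 1 = 0 := by
  have h : (1:ℝ) + cc = Real.exp 1 := by unfold cc; ring
  simp [PSI, h, Real.log_exp]

private lemma PSI_mono : MonotoneOn PSI (Ioc (0:ℝ) 2) := by
  apply monotoneOn_of_hasDerivWithinAt_nonneg (convex_Ioc 0 2)
  · intro y hy
    exact ((PSI_hasDeriv hy.1).differentiableAt.continuousAt).continuousWithinAt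
  · intro y hy
    rw [interior_Ioc] at hy
    exact (PSI_hasDeriv hy.1).hasDerivWithinAt
  · intro y hy
    rw [interior_Ioc] at hy
    obtain ⟨hy0, hy2⟩ := hy
    have hyc : 0 < y + cc := by have := cc_pos; linarith
    have key : y < cc ^ 2 := lt_trans hy2 cc_sq_gt_two
    have h1 : -(Real.exp 1 / (y + cc) ^ 2) - 1 / (y + cc) + 1 / y
        = (cc ^ 2 - y) / (y * (y + cc) ^ 2) := by
      have he : Real.exp 1 = cc + 1 := by unfold cc; ring
      rw [he]; field_simp; ring
    rw [h1]
    apply div_nonneg (by linarith) (by positivity)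

private lemma PSI_nonneg_of_two_le {x : ℝ} (hx : 2 ≤ x) : 0 ≤ PSI x := by
  have hx0 : (0:ℝ) < x := by linarith
  have hc := cc_pos
  have hxc : 0 < x + cc := by linarith
  have hu : (0:ℝ) ≤ cc / x := by positivity
  have h1u : (1:ℝ) + cc / x = (x + cc) / x := by field_simp
  have hlog : Real.log (x + cc) - Real.log x = Real.log (1 + cc / x) := by
    rw [h1u, Real.log_div hxc.ne' hx0.ne']
  have hpade := padeLog hu
  rw [h1u] at hpade
  have heq : (x + cc) / x / 2 - 1 / (2 * ((x + cc) / x))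
      = ((x + cc) ^ 2 - x ^ 2) / (2 * x * (x + cc)) := by
    field_simp
  have hbound : ((x + cc) ^ 2 - x ^ 2) / (2 * x * (x + cc)) ≤ Real.exp 1 / (x + cc) := by
    rw [div_le_div_iff₀ (by positivity) hxc]
    have he : Real.exp 1 = cc + 1 := by unfold cc; ring
    have hsq := cc_sq_lt_four
    nlinarith
  rw [heq] at hpade
  unfold PSI
  have : Real.log (x + cc) - Real.log x ≤ Real.exp 1 / (x + cc) := by
    rw [hlog, h1u]; linarith
  linarith

/-- the main auxiliary function `φ`. -/
private def PHI (x : ℝ) : ℝ := x * Real.log x - (x - 1) * Real.log (x + cc)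

private lemma PHI_hasDeriv {x : ℝ} (hx : 0 < x) : HasDerivAt PHI (PSI x) x := by
  have hxc : 0 < x + cc := by have := cc_pos; linarith
  have h1 : HasDerivAt (fun y : ℝ => y * Real.log y) (Real.log x + 1) x := by
    have := (hasDerivAt_id x).mul (Real.hasDerivAt_log hx.ne')
    refine this.congr_deriv ?_
    simp [hx.ne']
  have h2 : HasDerivAt (fun y : ℝ => (y - 1) * Real.log (y + cc))
      (Real.log (x + cc) + (x - 1) / (x + cc)) x := by
    have ha : HasDerivAt (fun y : ℝ => y + cc) 1 x := (hasDerivAt_id x).add_const cc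
    have := ((hasDerivAt_id x).sub_const 1).mul (ha.log hxc.ne')
    refine this.congr_deriv ?_
    simp [div_eq_mul_inv]
  have := h1.sub h2
  apply this.congr_deriv
  have he : Real.exp 1 = cc + 1 := by unfold cc; ring
  unfold PSI
  rw [he]
  field_simp
  ring

private lemma PHI_one : PHI 1 = 0 := by simp [PHI]

private lemma PHI_nonneg {x : ℝ} (hx : 0 < x) : 0 ≤ PHI x := by
  have hc := cc_pos
  rcases le_or_gt x 1 with hle | hgt
  · -- antitone on Ioc 0 1
    have hanti : AntitoneOn PHI (Ioc (0:ℝ) 1) := by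
      apply antitoneOn_of_hasDerivWithinAt_nonpos (convex_Ioc 0 1)
      · intro y hy
        exact ((PHI_hasDeriv hy.1).differentiableAt.continuousAt).continuousWithinAt
      · intro y hy
        rw [interior_Ioc] at hy
        exact (PHI_hasDeriv hy.1).hasDerivWithinAt
      · intro y hy
        rw [interior_Ioc] at hy
        have hmem : y ∈ Ioc (0:ℝ) 2 := ⟨hy.1, by linarith [hy.2]⟩
        have h1mem : (1:ℝ) ∈ Ioc (0:ℝ) 2 := by constructor <;> norm_num
        have := PSI_mono hmem h1mem (le_of_lt hy.2)
        rw [PSI_one] at this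
        exact this
    have := hanti ⟨hx, hle⟩ ⟨one_pos, le_refl 1⟩ hle
    rwa [PHI_one] at this
  · -- monotone on Ici 1
    have hmono : MonotoneOn PHI (Ici (1:ℝ)) := by
      apply monotoneOn_of_hasDerivWithinAt_nonneg (convex_Ici 1)
      · intro y hy
        have : (0:ℝ) < y := lt_of_lt_of_le one_pos hy
        exact ((PHI_hasDeriv this).differentiableAt.continuousAt).continuousWithinAt
      · intro y hy
        rw [interior_Ici] at hy
        exact (PHI_hasDeriv (lt_trans one_pos hy)).hasDerivWithinAt
      · intro y hy
        rw [interior_Ici] at hy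
        rcases le_or_gt y 2 with h2 | h2
        · have hmem : y ∈ Ioc (0:ℝ) 2 := ⟨lt_trans one_pos hy, h2⟩
          have h1mem : (1:ℝ) ∈ Ioc (0:ℝ) 2 := by constructor <;> norm_num
          have := PSI_mono h1mem hmem (le_of_lt hy)
          rwa [PSI_one] at this
        · exact PSI_nonneg_of_two_le h2.le
    have := hmono (self_mem_Ici) hgt.le hgt.le
    rwa [PHI_one] at this

end GAux

/-- For all real `x > 0` with `x ≠ 1`,
`g(x) = (1 - x^(-1/log x - x/(1-x))) / (1 - x) ≥ 1/e`. -/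
theorem g_ge_inv_e (x : ℝ) (hx : 0 < x) (hx1 : x ≠ 1) :
    Real.exp (-1) ≤ (1 - x ^ (-1 / Real.log x - x / (1 - x))) / (1 - x) := by
  have hL : Real.log x ≠ 0 := by
    intro h
    rcases Real.log_eq_zero.mp h with h | h | h <;> simp_all <;> linarith
  have hx1' : (1:ℝ) - x ≠ 0 := fun h => hx1 (by linarith [sub_eq_zero.mp h])
  have hc := cc_pos
  have hxc : (0:ℝ) < x + cc := by linarith
  have hrpow : x ^ (-1 / Real.log x - x / (1 - x))
      = Real.exp (-1 - Real.log x * x / (1 - x)) := by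
    rw [Real.rpow_def_of_pos hx]
    congr 1
    field_simp
  have hphi := PHI_nonneg hx
  unfold PHI at hphi
  have hee : Real.exp (-1) * Real.exp 1 = 1 := by
    rw [← Real.exp_add]; norm_num
  have hcc : cc = Real.exp 1 - 1 := rfl
  rcases lt_or_gt_of_ne hx1 with hlt | hgt
  · have h1x : 0 < 1 - x := by linarith
    rw [hrpow, le_div_iff₀ h1x]
    have h2 : -(Real.log x * x / (1 - x)) ≤ Real.log (x + cc) := by
      rw [← neg_div, div_le_iff₀ h1x]
      nlinarith [hphi]
    have h3 : Real.exp (-1 - Real.log x * x / (1 - x)) ≤ Real.exp (-1) * (x + cc) := by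
      calc Real.exp (-1 - Real.log x * x / (1 - x))
          ≤ Real.exp (-1 + Real.log (x + cc)) := by
            apply Real.exp_le_exp.mpr; linarith
        _ = Real.exp (-1) * (x + cc) := by rw [Real.exp_add, Real.exp_log hxc]
    nlinarith [h3, hee]
  · have h1x : 1 - x < 0 := by linarith
    rw [hrpow, le_div_iff_of_neg h1x]
    have h2 : Real.log (x + cc) ≤ -(Real.log x * x / (1 - x)) := by
      rw [← neg_div, le_div_iff_of_neg h1x]
      nlinarith [hphi]
    have h3 : Real.exp (-1) * (x + cc) ≤ Real.exp (-1 - Real.log x * x / (1 - x)) := by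
      calc Real.exp (-1) * (x + cc)
          = Real.exp (-1 + Real.log (x + cc)) := by rw [Real.exp_add, Real.exp_log hxc]
        _ ≤ _ := by apply Real.exp_le_exp.mpr; linarith
    nlinarith [h3, hee]
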